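/- Let M₀ > 0 and L₀ > 16·M₀². The function a(r)² = (1 − 2M₀/r)·(1 + L₀/r²) on (2M₀, ∞) attains a local maximum at r̂ = (L₀ − √(L₀² − 12·M₀²·L₀))/(2M₀), and r̂ lies strictly between the two solutions r₋ < r₊ of a(r) = 1. -/

import Mathlib

open Set

set_option maxHeartbeats 1000000


lemma effpot_hasDerivAt (M₀ L₀ x : ℝ) (hx : x ≠ 0) :
    HasDerivAt (fun r : ℝ => (1 - 2 * M₀ / r) * (1 + L₀ / r ^ 2))
      (2 * (M₀ * x ^ 2 - L₀ * x + 3 * M₀ * L₀) / x ^ 4) x := by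
  have h1 : HasDerivAt (fun r : ℝ => 1 - 2 * M₀ / r) (2 * M₀ / x ^ 2) x := by
    have h := ((hasDerivAt_inv hx).const_mul (2 * M₀)).const_sub 1
    have heq : (fun r : ℝ => 1 - 2 * M₀ / r) = fun r : ℝ => 1 - 2 * M₀ * r⁻¹ := by
      funext r; rw [div_eq_mul_inv]
    rw [heq]
    refine h.congr_deriv ?_
    field_simp
  have h2 : HasDerivAt (fun r : ℝ => 1 + L₀ / r ^ 2) (-(2 * L₀ * x) / (x ^ 2) ^ 2) x := by
    have hsq : HasDerivAt (fun r : ℝ => r ^ 2) (2 * x) x := by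
      simpa using hasDerivAt_pow 2 x
    have h := ((hsq.inv (pow_ne_zero 2 hx)).const_mul L₀).const_add 1
    have heq : (fun r : ℝ => 1 + L₀ / r ^ 2) = fun r : ℝ => 1 + L₀ * (r ^ 2)⁻¹ := by
      funext r; rw [div_eq_mul_inv]
    rw [heq]
    refine h.congr_deriv ?_
    field_simp
  have h := h1.mul h2
  refine h.congr_deriv ?_
  field_simp
  ring

/-- From `a(r) = 1` with `r > 2M₀` deduce the quadratic equation. -/
lemma effpot_root_eq (M₀ L₀ r : ℝ) (hM : 0 < M₀) (hL : 0 < L₀) (hr : 2 * M₀ < r)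
    (ha : Real.sqrt (1 - 2 * M₀ / r) * Real.sqrt (1 + L₀ / r ^ 2) = 1) :
    2 * M₀ * r ^ 2 - L₀ * r + 2 * M₀ * L₀ = 0 := by
  have hr0 : 0 < r := lt_trans (by linarith) hr
  have hA : (0:ℝ) ≤ 1 - 2 * M₀ / r := by
    rw [sub_nonneg, div_le_one hr0]; linarith
  rw [← Real.sqrt_mul hA] at ha
  have h1 : (1 - 2 * M₀ / r) * (1 + L₀ / r ^ 2) = 1 := by
    have := Real.sqrt_eq_one.mp ha
    exact this
  have hr0' : r ≠ 0 := ne_of_gt hr0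
  field_simp at h1
  nlinarith [h1, sq_nonneg r]

/-- For `M₀ > 0`, `L₀ > 16M₀²`, the function `a² = (1 − 2M₀/r)(1 + L₀/r²)` attains a
local maximum at `r̂ = (L₀ − √(L₀² − 12M₀²L₀))/(2M₀)`, which lies strictly between the
two solutions `r₋ < r₊` of `a(r) = 1`. -/
theorem effective_potential_local_max (M₀ L₀ rm rp : ℝ) (hM : 0 < M₀)
    (hL : 16 * M₀ ^ 2 < L₀) (hrm : 2 * M₀ < rm) (hrmp : rm < rp)
    (ham : Real.sqrt (1 - 2 * M₀ / rm) * Real.sqrt (1 + L₀ / rm ^ 2) = 1)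
    (hap : Real.sqrt (1 - 2 * M₀ / rp) * Real.sqrt (1 + L₀ / rp ^ 2) = 1) :
    IsLocalMax (fun r : ℝ => (1 - 2 * M₀ / r) * (1 + L₀ / r ^ 2))
      ((L₀ - Real.sqrt (L₀ ^ 2 - 12 * M₀ ^ 2 * L₀)) / (2 * M₀)) ∧
    rm < (L₀ - Real.sqrt (L₀ ^ 2 - 12 * M₀ ^ 2 * L₀)) / (2 * M₀) ∧
    (L₀ - Real.sqrt (L₀ ^ 2 - 12 * M₀ ^ 2 * L₀)) / (2 * M₀) < rp := by
  have hM2' : (0:ℝ) < M₀ ^ 2 := by positivity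
  have hL0' : 0 < L₀ := lt_trans (by nlinarith) hL
  have hgm := effpot_root_eq M₀ L₀ rm hM hL0' hrm ham
  have hgp := effpot_root_eq M₀ L₀ rp hM hL0' (lt_trans hrm hrmp) hap
  have hderiv := fun x hx => effpot_hasDerivAt M₀ L₀ x hx
  have hM2 : (0:ℝ) < M₀ ^ 2 := by positivity
  have hL0 : 0 < L₀ := lt_trans (by nlinarith) hL
  have hD : 0 < L₀ ^ 2 - 12 * M₀ ^ 2 * L₀ := by nlinarith
  set s := Real.sqrt (L₀ ^ 2 - 12 * M₀ ^ 2 * L₀) with hs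
  have hs2 : s ^ 2 = L₀ ^ 2 - 12 * M₀ ^ 2 * L₀ := Real.sq_sqrt hD.le
  have hs0 : 0 < s := Real.sqrt_pos.mpr hD
  have hsL : s < L₀ := by nlinarith
  set rh := (L₀ - s) / (2 * M₀) with hrh
  set r₂ := (L₀ + s) / (2 * M₀) with hr₂
  have h2M : (0:ℝ) < 2 * M₀ := by linarith
  have hrh0 : 0 < rh := div_pos (by linarith) h2M
  have hrhr₂ : rh < r₂ := by
    rw [hrh, hr₂]; exact div_lt_div_of_pos_right (by linarith) h2M
  have hsum2 : M₀ * (rh + r₂) = L₀ := by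
    rw [hrh, hr₂]; field_simp; ring
  have hprod2 : rh * r₂ = 3 * L₀ := by
    rw [hrh, hr₂, div_mul_div_comm, div_eq_iff (by positivity)]
    linear_combination -hs2
  have hfact : ∀ x : ℝ, M₀ * x ^ 2 - L₀ * x + 3 * M₀ * L₀ = M₀ * (x - rh) * (x - r₂) := by
    intro x
    linear_combination x * hsum2 - M₀ * hprod2
  have hrh4 : rh < 4 * M₀ := by
    rw [hrh, div_lt_iff₀ h2M]
    nlinarith [hs2, hs0.le]
  have hsum : 2 * M₀ * (rm + rp) = L₀ := by
    have h : (rm - rp) * (2 * M₀ * (rm + rp) - L₀) = 0 := by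
      linear_combination hgm - hgp
    rcases mul_eq_zero.mp h with h' | h'
    · exact absurd h' (sub_ne_zero.mpr (ne_of_lt hrmp))
    · linarith
  have hprod : rm * rp = L₀ := by
    have h : 2 * M₀ * (rm * rp - L₀) = 0 := by
      linear_combination -hgm + rm * hsum
    rcases mul_eq_zero.mp h with h' | h'
    · exact absurd h' (by positivity)
    · linarith [sub_eq_zero.mp h']
  have hroot : M₀ * rh ^ 2 - L₀ * rh + 3 * M₀ * L₀ = 0 := by
    rw [hfact]; ring
  have hgrh : 2 * M₀ * (rh - rm) * (rh - rp) < 0 := by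
    have he : 2 * M₀ * (rh - rm) * (rh - rp) = L₀ * (rh - 4 * M₀) := by
      linear_combination 2 * hroot - rh * hsum + 2 * M₀ * hprod
    rw [he]
    exact mul_neg_of_pos_of_neg hL0 (by linarith)
  have hbm : rm < rh := by
    by_contra h
    push_neg at h
    nlinarith [hgrh, mul_nonneg (mul_nonneg h2M.le (show (0:ℝ) ≤ rm - rh by linarith))
      (show (0:ℝ) ≤ rp - rh by linarith)]
  have hbp : rh < rp := by
    by_contra h
    push_neg at h
    nlinarith [hgrh, mul_nonneg (mul_nonneg h2M.le (show (0:ℝ) ≤ rh - rm by linarith))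
      (show (0:ℝ) ≤ rh - rp by linarith)]
  refine ⟨?_, hbm, hbp⟩
  have half_lt : rh / 2 < rh := by linarith
  apply isLocalMax_of_deriv_Ioo half_lt hrhr₂
  · exact (hderiv rh (ne_of_gt hrh0)).continuousAt
  · intro x hx
    have hx0 : 0 < x := by rcases hx with ⟨h1, _⟩; linarith
    exact (hderiv x (ne_of_gt hx0)).differentiableAt.differentiableWithinAt
  · intro x hx
    have hx0 : 0 < x := by rcases hx with ⟨h1, _⟩; linarith
    exact (hderiv x (ne_of_gt hx0)).differentiableAt.differentiableWithinAt
  · intro x hx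
    rcases hx with ⟨h1, h2⟩
    have hx0 : 0 < x := by linarith
    rw [(hderiv x (ne_of_gt hx0)).deriv]
    apply div_nonneg _ (by positivity)
    rw [hfact]
    nlinarith [mul_pos (mul_pos hM (show 0 < rh - x by linarith)) (show 0 < r₂ - x by linarith)]
  · intro x hx
    rcases hx with ⟨h1, h2⟩
    have hx0 : 0 < x := by linarith
    rw [(hderiv x (ne_of_gt hx0)).deriv]
    apply div_nonpos_of_nonpos_of_nonneg _ (by positivity)
    rw [hfact]
    nlinarith [mul_pos (mul_pos hM (show 0 < x - rh by linarith)) (show 0 < r₂ - x by linarith)]
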